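/- Let n > 1 and let ξ ∈ ℝ^n have n pairwise distinct coordinates. Then there exists δ > 0 such that for every ε with 0 < ε < δ, the open ball B_ε(ξ) ⊆ ℝ^n of radius ε around ξ contains points ζ and ν satisfying: (1) p_i(ξ) = p_i(ζ) = p_i(ν) for all i ∈ {1,…,n−1}; (2) p_n(ζ) < p_n(ξ) < p_n(ν); (3) no coordinate of ξ equals a coordinate of ζ, and no coordinate of ξ equals a coordinate of ν. -/

import Mathlib

open Polynomial Finset

namespace PSP

variable {n : ℕ}

lemma prod_eq (x : Fin n → ℝ) :
    ((Finset.univ.val.map x).map fun t => Polynomial.X - Polynomial.C t).prod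
      = ∏ j, (Polynomial.X - Polynomial.C (x j)) := by
  rw [Multiset.map_map, Finset.prod_eq_multiset_prod]
  rfl

lemma coeff_prod (x : Fin n → ℝ) {k : ℕ} (hk : k ≤ n) :
    (∏ j, (Polynomial.X - Polynomial.C (x j))).coeff k
      = (-1)^(n-k) * (Finset.univ.val.map x).esymm (n-k) := by
  rw [← prod_eq]
  have hcard : Multiset.card (Finset.univ.val.map x) = n := by simp
  rw [Multiset.prod_X_sub_C_coeff _ (by rw [hcard]; exact hk), hcard]

lemma eval_esymm (x : Fin n → ℝ) (m : ℕ) :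
    MvPolynomial.eval x (MvPolynomial.esymm (Fin n) ℝ m)
      = (Finset.univ.val.map x).esymm m := by
  have := MvPolynomial.aeval_esymm_eq_multiset_esymm (Fin n) ℝ m x
  rwa [MvPolynomial.aeval_def, Algebra.algebraMap_self, MvPolynomial.eval₂_id] at this

lemma newton (x : Fin n → ℝ) (k : ℕ) (hk : 0 < k) :
    ∑ l, x l ^ k = (-1:ℝ)^(k+1) * k * (Finset.univ.val.map x).esymm k -
      ∑ a ∈ (Finset.HasAntidiagonal.antidiagonal k).filter (fun a => a.1 ∈ Set.Ioo 0 k),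
        (-1:ℝ)^a.1 * (Finset.univ.val.map x).esymm a.1 * ∑ l, x l ^ a.2 := by
  have h := congrArg (MvPolynomial.eval x)
    (MvPolynomial.psum_eq_mul_esymm_sub_sum (Fin n) ℝ k hk)
  simpa [MvPolynomial.psum, eval_esymm] using h

lemma key (hn : 0 < n) (ξ ζ : Fin n → ℝ) (t : ℝ)
    (h : (∏ j, (Polynomial.X - Polynomial.C (ζ j)))
        = (∏ j, (Polynomial.X - Polynomial.C (ξ j))) + Polynomial.C t) :
    (∀ k, k ≤ n - 1 → ∑ l, ζ l ^ k = ∑ l, ξ l ^ k) ∧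
      ∑ l, ζ l ^ n = (∑ l, ξ l ^ n) - n * t := by
  have hE : ∀ m, m ≤ n - 1 →
      (Finset.univ.val.map ζ).esymm m = (Finset.univ.val.map ξ).esymm m := by
    intro m hm
    rcases Nat.eq_zero_or_pos m with h0 | h0
    · simp [h0, Multiset.esymm]
    · have h1 : n - m ≤ n := Nat.sub_le _ _
      have hc := congrArg (fun p => Polynomial.coeff p (n - m)) h
      simp only [Polynomial.coeff_add, coeff_prod ζ h1, coeff_prod ξ h1,
        Polynomial.coeff_C, if_neg (by omega : ¬ (n - m = 0)), add_zero] at hc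
      have hmm : n - (n - m) = m := by omega
      rw [hmm] at hc
      have hne : ((-1:ℝ))^m ≠ 0 := by positivity
      exact mul_left_cancel₀ hne hc
  have hsq : ((-1:ℝ)^n) * ((-1:ℝ)^n) = 1 := by
    rw [← pow_add]; exact Even.neg_one_pow ⟨n, rfl⟩
  have hEn : (Finset.univ.val.map ζ).esymm n
      = (Finset.univ.val.map ξ).esymm n + (-1:ℝ)^n * t := by
    have hc := congrArg (fun p => Polynomial.coeff p 0) h
    simp only [Polynomial.coeff_add, coeff_prod ζ (Nat.zero_le n),
      coeff_prod ξ (Nat.zero_le n), Nat.sub_zero,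
      Polynomial.coeff_C, eq_self_iff_true, if_true] at hc
    linear_combination ((-1:ℝ)^n) * hc
      + ((Finset.univ.val.map ξ).esymm n - (Finset.univ.val.map ζ).esymm n) * hsq
  have hP : ∀ k, k ≤ n - 1 → ∑ l, ζ l ^ k = ∑ l, ξ l ^ k := by
    intro k
    induction k using Nat.strong_induction_on with
    | _ k ih =>
      intro hk
      rcases Nat.eq_zero_or_pos k with h0 | h0
      · simp [h0]
      · rw [newton ζ k h0, newton ξ k h0, hE k hk]
        congr 1
        refine Finset.sum_congr rfl fun a ha => ?_
        simp only [Finset.mem_filter, Finset.HasAntidiagonal.mem_antidiagonal, Set.mem_Ioo] at ha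
        rw [hE a.1 (by omega), ih a.2 (by omega) (by omega)]
  refine ⟨hP, ?_⟩
  have hodd : ((-1:ℝ)^(n+1)) * ((-1:ℝ)^n) = -1 := by
    rw [← pow_add]; exact Odd.neg_one_pow ⟨n, by ring⟩
  rw [newton ζ n hn, newton ξ n hn, hEn]
  have hsum : ∑ a ∈ (Finset.HasAntidiagonal.antidiagonal n).filter (fun a => a.1 ∈ Set.Ioo 0 n),
        (-1:ℝ)^a.1 * (Finset.univ.val.map ζ).esymm a.1 * ∑ l, ζ l ^ a.2
      = ∑ a ∈ (Finset.HasAntidiagonal.antidiagonal n).filter (fun a => a.1 ∈ Set.Ioo 0 n),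
        (-1:ℝ)^a.1 * (Finset.univ.val.map ξ).esymm a.1 * ∑ l, ξ l ^ a.2 := by
    refine Finset.sum_congr rfl fun a ha => ?_
    simp only [Finset.mem_filter, Finset.HasAntidiagonal.mem_antidiagonal, Set.mem_Ioo] at ha
    rw [hE a.1 (by omega), hP a.2 (by omega)]
  rw [hsum]
  linear_combination ((n:ℝ) * t) * hodd



lemma sign_pres {A B t : ℝ} (hAB : A * B < 0) (hA : |t| < |A|) (hB : |t| < |B|) :
    (A + t) * (B + t) < 0 := by
  rcases abs_cases A with ⟨h1, h2⟩ | ⟨h1, h2⟩ <;>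
    rcases abs_cases B with ⟨h3, h4⟩ | ⟨h3, h4⟩ <;>
    rcases abs_cases t with ⟨h5, h6⟩ | ⟨h5, h6⟩ <;>
    nlinarith

lemma sign_prod (ξ : Fin n → ℝ) {r : ℝ} (hr : 0 < r)
    (hgap : ∀ j k, j ≠ k → 2*r < |ξ j - ξ k|) (j : Fin n) :
    (∏ k, (ξ j - r - ξ k)) * (∏ k, (ξ j + r - ξ k)) < 0 := by
  rw [← Finset.prod_mul_distrib, ← Finset.prod_erase_mul _ _ (Finset.mem_univ j)]
  apply mul_neg_of_pos_of_neg
  · apply Finset.prod_pos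
    intro k hk
    have hk' : j ≠ k := fun h => (Finset.mem_erase.mp hk).1 h.symm
    have := hgap j k hk'
    nlinarith [sq_abs (ξ j - ξ k), abs_nonneg (ξ j - ξ k)]
  · nlinarith

lemma exists_pert (hn : 0 < n) (ξ : Fin n → ℝ) {r : ℝ} (hr : 0 < r)
    (hgap : ∀ j k, j ≠ k → 2*r < |ξ j - ξ k|) :
    ∃ T > (0:ℝ), ∀ t : ℝ, t ≠ 0 → |t| < T →
      ∃ ζ : Fin n → ℝ, (∀ j, |ζ j - ξ j| < r) ∧
        (∏ j, (Polynomial.X - Polynomial.C (ζ j)))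
          = (∏ j, (Polynomial.X - Polynomial.C (ξ j))) + Polynomial.C t := by
  haveI : Nonempty (Fin n) := ⟨⟨0, hn⟩⟩
  set f : ℝ → ℝ := fun x => ∏ k, (x - ξ k) with hf
  have hcont : Continuous f :=
    continuous_finset_prod _ fun k _ => continuous_id.sub continuous_const
  have hfne : ∀ j : Fin n, ∀ s : ℝ, |s| = r → f (ξ j + s) ≠ 0 := by
    intro j s hs
    have hs0 : s ≠ 0 := by rintro rfl; simp at hs; linarith
    rw [hf]
    simp only [Finset.prod_ne_zero_iff, Finset.mem_univ, forall_true_left]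
    intro k hzero
    have hek : ξ j - ξ k = -s := by linarith [hzero]
    rcases eq_or_ne j k with rfl | hjk
    · apply hs0; have : (0:ℝ) = -s := by rw [← hek]; ring
      linarith
    · have h2 := hgap j k hjk
      rw [hek, abs_neg, hs] at h2; linarith
  set T : ℝ := Finset.univ.inf' Finset.univ_nonempty
      (fun j : Fin n => min |f (ξ j - r)| |f (ξ j + r)|) with hT
  have hTpos : 0 < T := by
    rw [hT, Finset.lt_inf'_iff]
    intro j _
    refine lt_min (abs_pos.mpr ?_) (abs_pos.mpr ?_)
    · have := hfne j (-r) (by rw [abs_neg, abs_of_pos hr])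
      simpa [sub_eq_add_neg] using this
    · exact hfne j r (abs_of_pos hr)
  refine ⟨T, hTpos, ?_⟩
  intro t ht0 htT
  have hbound : ∀ j : Fin n, |t| < |f (ξ j - r)| ∧ |t| < |f (ξ j + r)| := by
    intro j
    have h1 : T ≤ min |f (ξ j - r)| |f (ξ j + r)| := Finset.inf'_le _ (Finset.mem_univ j)
    exact ⟨lt_of_lt_of_le htT (h1.trans (min_le_left _ _)),
           lt_of_lt_of_le htT (h1.trans (min_le_right _ _))⟩
  set g : ℝ → ℝ := fun x => f x + t with hg
  have hgcont : Continuous g := hcont.add continuous_const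
  have hsign : ∀ j : Fin n, g (ξ j - r) * g (ξ j + r) < 0 := by
    intro j
    have hprod : f (ξ j - r) * f (ξ j + r) < 0 := by
      have := sign_prod ξ hr hgap j
      simpa [hf, sub_right_comm] using this
    exact sign_pres hprod (hbound j).1 (hbound j).2
  have hroot : ∀ j : Fin n, ∃ c ∈ Set.Ioo (ξ j - r) (ξ j + r), g c = 0 := by
    intro j
    have hle : ξ j - r ≤ ξ j + r := by linarith
    rcases mul_neg_iff.mp (hsign j) with ⟨hpos, hneg⟩ | ⟨hneg, hpos⟩
    · have h0 : (0:ℝ) ∈ Set.Ioo (g (ξ j + r)) (g (ξ j - r)) := ⟨hneg, hpos⟩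
      obtain ⟨c, hc, hc0⟩ := intermediate_value_Ioo' hle hgcont.continuousOn h0
      exact ⟨c, hc, hc0⟩
    · have h0 : (0:ℝ) ∈ Set.Ioo (g (ξ j - r)) (g (ξ j + r)) := ⟨hneg, hpos⟩
      obtain ⟨c, hc, hc0⟩ := intermediate_value_Ioo hle hgcont.continuousOn h0
      exact ⟨c, hc, hc0⟩
  choose ζ hζmem hζ0 using hroot
  have hζr : ∀ j, |ζ j - ξ j| < r := by
    intro j
    rcases hζmem j with ⟨hl, hu⟩
    rw [abs_lt]; constructor <;> linarith
  have hζinj : Function.Injective ζ := by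
    intro j k hjk
    by_contra hne
    have h2 := hgap j k hne
    have h3 := hζr j
    have h4 := hζr k
    have h5 : |ξ j - ξ k| ≤ |ξ j - ζ j| + |ζ j - ξ k| := abs_sub_le _ _ _
    have h6 : |ζ j - ξ k| = |ζ k - ξ k| := by rw [hjk]
    rw [h6, abs_sub_comm (ξ j) (ζ j)] at h5
    linarith
  -- polynomial identity
  have heval : ∀ i : Fin n,
      ((∏ j, (Polynomial.X - Polynomial.C (ζ j)))
        - ((∏ j, (Polynomial.X - Polynomial.C (ξ j))) + Polynomial.C t)).eval (ζ i) = 0 := by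
    intro i
    have e1 : (∏ j, (Polynomial.X - Polynomial.C (ζ j))).eval (ζ i) = 0 := by
      rw [Polynomial.eval_prod]
      exact Finset.prod_eq_zero (Finset.mem_univ i) (by simp)
    have e2 : (∏ j, (Polynomial.X - Polynomial.C (ξ j))).eval (ζ i) = f (ζ i) := by
      rw [Polynomial.eval_prod, hf]; simp
    have e3 := hζ0 i
    rw [hg] at e3
    simp only [Polynomial.eval_sub, Polynomial.eval_add, Polynomial.eval_C, e1, e2]
    dsimp at e3 ⊢
    linarith
  have hA : (∏ j, (Polynomial.X - Polynomial.C (ζ j))).Monic :=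
    monic_prod_of_monic _ _ fun j _ => monic_X_sub_C _
  have hB : (∏ j, (Polynomial.X - Polynomial.C (ξ j))).Monic :=
    monic_prod_of_monic _ _ fun j _ => monic_X_sub_C _
  have hdA : (∏ j, (Polynomial.X - Polynomial.C (ζ j))).natDegree = n := by
    rw [Polynomial.natDegree_prod _ _ (fun j _ => X_sub_C_ne_zero _)]
    simp
  have hdB : (∏ j, (Polynomial.X - Polynomial.C (ξ j))).natDegree = n := by
    rw [Polynomial.natDegree_prod _ _ (fun j _ => X_sub_C_ne_zero _)]
    simp
  have hP0 : (∏ j, (Polynomial.X - Polynomial.C (ζ j)))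
      - ((∏ j, (Polynomial.X - Polynomial.C (ξ j))) + Polynomial.C t) = 0 := by
    apply Polynomial.eq_zero_of_natDegree_lt_card_of_eval_eq_zero _ hζinj heval
    rw [Fintype.card_fin]
    by_cases hP : (∏ j, (Polynomial.X - Polynomial.C (ζ j)))
        - ((∏ j, (Polynomial.X - Polynomial.C (ξ j))) + Polynomial.C t) = 0
    · rw [hP]; simpa using hn
    · rw [Polynomial.natDegree_lt_iff_degree_lt hP]
      have hdegAB : (∏ j, (Polynomial.X - Polynomial.C (ζ j))).degree
          = (∏ j, (Polynomial.X - Polynomial.C (ξ j))).degree := by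
        rw [Polynomial.degree_eq_natDegree hA.ne_zero,
            Polynomial.degree_eq_natDegree hB.ne_zero, hdA, hdB]
      have hlc : (∏ j, (Polynomial.X - Polynomial.C (ζ j))).leadingCoeff
          = (∏ j, (Polynomial.X - Polynomial.C (ξ j))).leadingCoeff := by
        rw [hA.leadingCoeff, hB.leadingCoeff]
      have hd1 : ((∏ j, (Polynomial.X - Polynomial.C (ζ j)))
          - (∏ j, (Polynomial.X - Polynomial.C (ξ j)))).degree < ((n : ℕ) : WithBot ℕ) := by
        have h := Polynomial.degree_sub_lt hdegAB hA.ne_zero hlc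
        rwa [Polynomial.degree_eq_natDegree hA.ne_zero, hdA] at h
      have heq : (∏ j, (Polynomial.X - Polynomial.C (ζ j)))
          - ((∏ j, (Polynomial.X - Polynomial.C (ξ j))) + Polynomial.C t)
          = ((∏ j, (Polynomial.X - Polynomial.C (ζ j)))
            - (∏ j, (Polynomial.X - Polynomial.C (ξ j)))) - Polynomial.C t := by ring
      rw [heq]
      refine lt_of_le_of_lt (Polynomial.degree_sub_le _ _) (max_lt hd1 ?_)
      exact lt_of_le_of_lt Polynomial.degree_C_le (by exact_mod_cast hn)
  exact ⟨ζ, hζr, sub_eq_zero.mp hP0⟩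



lemma ne_coord {ξ ζ : Fin n → ℝ} {t : ℝ} (ht : t ≠ 0)
    (h : (∏ j, (Polynomial.X - Polynomial.C (ζ j)))
        = (∏ j, (Polynomial.X - Polynomial.C (ξ j))) + Polynomial.C t)
    (i l : Fin n) : ξ i ≠ ζ l := by
  intro he
  have hc := congrArg (Polynomial.eval (ξ i)) h
  rw [Polynomial.eval_add, Polynomial.eval_C, Polynomial.eval_prod, Polynomial.eval_prod,
      Finset.prod_eq_zero (Finset.mem_univ l) (by simp [he]),
      Finset.prod_eq_zero (Finset.mem_univ i) (by simp)] at hc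
  simp at hc
  exact ht hc.symm

end PSP

/-- Perturbation lemma: around any point `ξ ∈ ℝ^n` with pairwise distinct coordinates,
every small enough Euclidean ball contains points `ζ, ν` with the same power sums
`p_1,…,p_{n-1}` as `ξ`, with `p_n(ζ) < p_n(ξ) < p_n(ν)`, and such that no coordinate
of `ξ` occurs among the coordinates of `ζ` or of `ν`. -/
theorem powerSum_perturbation (n : ℕ) (hn : 1 < n)
    (ξ : EuclideanSpace ℝ (Fin n)) (hξ : Function.Injective ξ) :
    ∃ δ > (0 : ℝ), ∀ ε : ℝ, 0 < ε → ε < δ →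
      ∃ ζ ∈ Metric.ball ξ ε, ∃ ν ∈ Metric.ball ξ ε,
        (∀ i : ℕ, 1 ≤ i → i ≤ n - 1 →
            (∑ l, ξ l ^ i = ∑ l, ζ l ^ i) ∧ (∑ l, ξ l ^ i = ∑ l, ν l ^ i)) ∧
        (∑ l, ζ l ^ n < ∑ l, ξ l ^ n) ∧ (∑ l, ξ l ^ n < ∑ l, ν l ^ n) ∧
        (∀ i l : Fin n, ξ i ≠ ζ l ∧ ξ i ≠ ν l) := by
  classical
  have hn0 : 0 < n := by omega
  haveI : Nonempty (Fin n) := ⟨⟨0, hn0⟩⟩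
  have hoff : (Finset.univ.offDiag (α := Fin n)).Nonempty :=
    ⟨(⟨0, by omega⟩, ⟨1, by omega⟩), by simp [Finset.mem_offDiag, Fin.ext_iff]⟩
  set gap := (Finset.univ.offDiag).inf' hoff (fun p => |ξ p.1 - ξ p.2|) with hgapdef
  have hgappos : 0 < gap := by
    rw [hgapdef, Finset.lt_inf'_iff]
    intro p hp
    have hne : p.1 ≠ p.2 := (Finset.mem_offDiag.mp hp).2.2
    exact abs_pos.mpr (sub_ne_zero.mpr fun h => hne (hξ h))
  have hsn : 0 < Real.sqrt n := Real.sqrt_pos.mpr (by exact_mod_cast hn0)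
  refine ⟨Real.sqrt n * gap, by positivity, ?_⟩
  intro ε hε hεδ
  set r := ε / (2 * Real.sqrt n) with hrdef
  have hr : 0 < r := by positivity
  have hgap : ∀ j k : Fin n, j ≠ k → 2*r < |ξ j - ξ k| := by
    intro j k hjk
    have h1 : gap ≤ |ξ j - ξ k| :=
      Finset.inf'_le _ (show (j, k) ∈ Finset.univ.offDiag by
        simp [Finset.mem_offDiag, hjk])
    have h2 : 2*r < gap := by
      rw [hrdef]
      rw [show 2 * (ε / (2 * Real.sqrt n)) = ε / Real.sqrt n by field_simp]
      rw [div_lt_iff₀ hsn]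
      nlinarith
    linarith
  obtain ⟨T, hT, hTprop⟩ := PSP.exists_pert hn0 ξ hr hgap
  obtain ⟨ζ, hζr, hζpoly⟩ := hTprop (T/2) (by positivity)
    (by rw [abs_of_pos (by positivity)]; linarith)
  obtain ⟨ν, hνr, hνpoly⟩ := hTprop (-(T/2)) (by simp; positivity)
    (by rw [abs_neg, abs_of_pos (by positivity)]; linarith)
  obtain ⟨hζpow, hζn⟩ := PSP.key hn0 ξ ζ (T/2) hζpoly
  obtain ⟨hνpow, hνn⟩ := PSP.key hn0 ξ ν (-(T/2)) hνpoly
  have hball : ∀ x : EuclideanSpace ℝ (Fin n), (∀ j, |x j - ξ j| < r) →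
      x ∈ Metric.ball ξ ε := by
    intro x hx
    rw [Metric.mem_ball, EuclideanSpace.dist_eq]
    have hsum : ∑ i, dist (x i) (ξ i) ^ 2 ≤ ∑ _i : Fin n, r^2 := by
      refine Finset.sum_le_sum fun i _ => ?_
      rw [Real.dist_eq]
      have h1 := (hx i).le
      nlinarith [abs_nonneg (x i - ξ i), sq_abs (x i - ξ i)]
    have hconst : ∑ _i : Fin n, r^2 = (n : ℝ) * r^2 := by
      simp [Finset.sum_const, Finset.card_univ, nsmul_eq_mul]
    have h2 : Real.sqrt (∑ i, dist (x i) (ξ i) ^ 2) ≤ Real.sqrt ((n:ℝ) * r^2) :=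
      Real.sqrt_le_sqrt (by rw [← hconst]; exact hsum)
    have h3 : Real.sqrt ((n:ℝ) * r^2) = Real.sqrt n * r := by
      rw [Real.sqrt_mul (by positivity), Real.sqrt_sq hr.le]
    have h4 : Real.sqrt n * r = ε / 2 := by
      rw [hrdef]; field_simp
    calc Real.sqrt (∑ i, dist (x i) (ξ i) ^ 2) ≤ Real.sqrt ((n:ℝ) * r^2) := h2
      _ = ε / 2 := by rw [h3, h4]
      _ < ε := by linarith
  refine ⟨WithLp.toLp 2 ζ, hball _ hζr, WithLp.toLp 2 ν, hball _ hνr, ?_, ?_, ?_, ?_⟩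
  all_goals simp only [PiLp.toLp_apply]
  · intro i h1 h2
    exact ⟨(hζpow i h2).symm, (hνpow i h2).symm⟩
  · rw [hζn]
    have : 0 < (n:ℝ) * (T/2) := by positivity
    linarith
  · rw [hνn]
    have : 0 < (n:ℝ) * (T/2) := by positivity
    have h5 : (∑ l, ξ l ^ n) - (n:ℝ) * -(T/2) = (∑ l, ξ l ^ n) + (n:ℝ) * (T/2) := by ring
    rw [h5]; linarith
  · intro i l
    exact ⟨PSP.ne_coord (by positivity) hζpoly i l,
           PSP.ne_coord (by simp; positivity) hνpoly i l⟩
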